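/- arXiv:1102.4409 — 2 statements merged into one kernel-verified Lean document; each statement's English description precedes it below -/
import Mathlib

section
/- Let D be a Eulerian directed graph on n vertices with all degrees positive. For any subsets X, Y of V, ||E(X,Y)| − vol(X)·vol(Y)/vol(D)| ≤ σ_0 · √(vol(X)·vol(Y)·vol(X̄)·vol(Ȳ)) / vol(D), where E(X,Y) is the set of directed edges (u,v) of D with u ∈ X and v ∈ Y, and σ_0 is the second largest singular value of T^{-1/2} A T^{-1/2}. -/
open Matrix Polynomial

noncomputable section

/-- The (out-)degree of a vertex in a directed graph with adjacency matrix `A`. -/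
def ddeg {V : Type*} [Fintype V] (A : Matrix V V ℝ) (x : V) : ℝ := ∑ y, A x y

/-- The diagonal matrix `T^{-1/2}` of a directed graph. -/
def dInvSqrtT {V : Type*} [Fintype V] [DecidableEq V] (A : Matrix V V ℝ) : Matrix V V ℝ :=
  Matrix.diagonal fun x => (Real.sqrt (ddeg A x))⁻¹

/-- The non-symmetric Laplacian `vecL = I - T^{-1/2} A T^{-1/2}` of a directed graph. -/
def dvecL {V : Type*} [Fintype V] [DecidableEq V] (A : Matrix V V ℝ) : Matrix V V ℝ :=
  1 - dInvSqrtT A * A * dInvSqrtT A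

/-- The Laplacian `(vecL + vecLᵀ)/2` of a directed graph. -/
def dLap {V : Type*} [Fintype V] [DecidableEq V] (A : Matrix V V ℝ) : Matrix V V ℝ :=
  (1 / 2 : ℝ) • (dvecL A + (dvecL A)ᵀ)

/-- The matrix `L_α = I - (1-α) vecL = T^{1/2} P_α T^{-1/2}`. -/
def dLalpha {V : Type*} [Fintype V] [DecidableEq V] (A : Matrix V V ℝ) (α : ℝ) :
    Matrix V V ℝ :=
  1 - (1 - α) • dvecL A

/-- The transition matrix `P_α = α I + (1-α) T⁻¹ A` of the α-lazy random walk. -/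
def dTrans {V : Type*} [Fintype V] [DecidableEq V] (A : Matrix V V ℝ) (α : ℝ) :
    Matrix V V ℝ :=
  α • (1 : Matrix V V ℝ) + (1 - α) • ((Matrix.diagonal fun x => (ddeg A x)⁻¹) * A)

/-- The volume of a set of vertices of a directed graph. -/
def dvol {V : Type*} [Fintype V] (A : Matrix V V ℝ) (X : Finset V) : ℝ :=
  ∑ x ∈ X, ddeg A x

/-- The unit vector `φ₀` with `φ₀(x) = √(d_x)/√(vol D)`. -/
def dphi {V : Type*} [Fintype V] (A : Matrix V V ℝ) : V → ℝ :=
  fun x => Real.sqrt (ddeg A x) / Real.sqrt (dvol A Finset.univ)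

/-- Euclidean norm of a (row or column) vector. -/
def euclNorm {m : Type*} [Fintype m] (f : m → ℝ) : ℝ := Real.sqrt (∑ x, f x ^ 2)

/-- The set of values `‖L_α f‖ / ‖f‖` over nonzero vectors `f` orthogonal to `φ₀ᵀ`;
its greatest element is the second largest singular value `σ_α` of `L_α`. -/
def sigmaSet {V : Type*} [Fintype V] [DecidableEq V] (A : Matrix V V ℝ) (α : ℝ) : Set ℝ :=
  {r | ∃ f : V → ℝ, f ≠ 0 ∧ (∑ x, f x * dphi A x) = 0 ∧
    r = euclNorm (dLalpha A α *ᵥ f) / euclNorm f}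

/-- `μ` lists the eigenvalues of the square matrix `M` (with multiplicity)
in non-decreasing order. -/
def IsEigenSeq {m : Type*} [Fintype m] [DecidableEq m] (M : Matrix m m ℝ) {n : ℕ}
    (μ : Fin n → ℝ) : Prop :=
  Monotone μ ∧ M.charpoly = ∏ i, (X - C (μ i))

/-- expander mixing lemma for Eulerian directed graphs via `σ₀`. -/
theorem stmt_8 {V : Type*} [Fintype V] [DecidableEq V]
    (A : Matrix V V ℝ)
    (h01 : ∀ x y, A x y = 0 ∨ A x y = 1)
    (hEuler : ∀ x, (∑ y, A x y) = ∑ y, A y x)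
    (hdegpos : ∀ x, 0 < ddeg A x)
    (σ₀ : ℝ) (hσ₀ : IsGreatest (sigmaSet A 0) σ₀)
    (X Y : Finset V) :
    |(∑ x ∈ X, ∑ y ∈ Y, A x y) - dvol A X * dvol A Y / dvol A Finset.univ| ≤
      σ₀ * Real.sqrt (dvol A X * dvol A Y * dvol A Xᶜ * dvol A Yᶜ) /
        dvol A Finset.univ := by
  classical
  cases isEmpty_or_nonempty V with
  | inl hV =>
    obtain ⟨f, hf, -, -⟩ := hσ₀.1
    exact absurd (Subsingleton.elim f 0) hf
  | inr hV =>
  have hvol : (0:ℝ) < dvol A Finset.univ :=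
    Finset.sum_pos (fun x _ => hdegpos x) Finset.univ_nonempty
  set d : V → ℝ := ddeg A with hd
  set vol : ℝ := dvol A Finset.univ with hvoldef
  set s : V → ℝ := fun x => Real.sqrt (d x) with hsdef
  have hspos : ∀ x, 0 < s x := fun x => Real.sqrt_pos.2 (hdegpos x)
  have hsne : ∀ x, s x ≠ 0 := fun x => (hspos x).ne'
  have hss : ∀ x, s x * s x = d x := fun x => Real.mul_self_sqrt (hdegpos x).le
  set B : V → V → ℝ := fun x y => (s x)⁻¹ * A x y * (s y)⁻¹ with hB
  -- entries of L_0
  have hLapp : ∀ v : V → ℝ, ∀ x, (dLalpha A 0 *ᵥ v) x = ∑ y, B x y * v y := by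
    intro v x
    have h1 : dLalpha A 0 = dInvSqrtT A * A * dInvSqrtT A := by
      simp [dLalpha, dvecL]
    rw [h1]
    simp [Matrix.mulVec, dotProduct, dInvSqrtT, Matrix.mul_apply, Matrix.diagonal,
      Finset.sum_mul, Finset.mul_sum, hB]
    rfl
  have hind : ∀ y, ∑ x, A x y = d y := fun y => (hEuler y).symm
  -- indicator functions
  set indX : V → ℝ := fun x => if x ∈ X then 1 else 0 with hiX
  set indY : V → ℝ := fun y => if y ∈ Y then 1 else 0 with hiY
  set cX : ℝ := dvol A X / vol with hcX
  set cY : ℝ := dvol A Y / vol with hcY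
  set f : V → ℝ := fun x => (indX x - cX) * s x with hf
  set g : V → ℝ := fun y => (indY y - cY) * s y with hg
  have hsum_indX : ∑ x, indX x * d x = dvol A X := by
    simp [hiX, ite_mul, dvol, hd]
  have hsum_indY : ∑ x, indY x * d x = dvol A Y := by
    simp [hiY, ite_mul, dvol, hd]
  have hsumd : ∑ x, d x = vol := by simp [hvoldef, dvol, hd]
  -- orthogonality
  have horth : ∀ ind : V → ℝ, ∀ c : ℝ, (∑ x, ind x * d x) = c * vol →
      (∑ x, (fun x => (ind x - c) * s x) x * dphi A x) = 0 := by
    intro ind c hc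
    have hsv : Real.sqrt vol ≠ 0 := Real.sqrt_ne_zero'.2 hvol
    have h1 : ∀ x, ((ind x - c) * s x) * dphi A x
        = (ind x * d x - c * d x) / Real.sqrt vol := by
      intro x
      have hphi : dphi A x = s x / Real.sqrt vol := rfl
      rw [hphi]
      field_simp
      linear_combination (ind x - c) * hss x
    calc (∑ x, ((ind x - c) * s x) * dphi A x)
        = (∑ x, (ind x * d x - c * d x)) / Real.sqrt vol := by
          rw [Finset.sum_div]; exact Finset.sum_congr rfl fun x _ => h1 x
      _ = 0 := by
          rw [Finset.sum_sub_distrib, hc, ← Finset.mul_sum, hsumd, sub_self, zero_div]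
  have horthf : (∑ x, f x * dphi A x) = 0 :=
    horth indX cX (by rw [hsum_indX, hcX]; field_simp)
  have horthg : (∑ x, g x * dphi A x) = 0 :=
    horth indY cY (by rw [hsum_indY, hcY]; field_simp)
  -- squared norms
  have hnormsq : ∀ (ind : V → ℝ) (c vZ : ℝ), (∀ x, ind x * ind x = ind x) →
      (∑ x, ind x * d x) = vZ →
      (∑ x, ((ind x - c) * s x) ^ 2) = vZ - 2 * c * vZ + c ^ 2 * vol := by
    intro ind c vZ hidem hvZ
    have h1 : ∀ x, ((ind x - c) * s x) ^ 2
        = ind x * d x - 2 * c * (ind x * d x) + c ^ 2 * d x := by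
      intro x
      linear_combination (ind x - c) ^ 2 * hss x + d x * hidem x
    rw [Finset.sum_congr rfl fun x _ => h1 x]
    rw [Finset.sum_add_distrib, Finset.sum_sub_distrib, ← Finset.mul_sum, ← Finset.mul_sum,
      hvZ, hsumd]
  have hcomplvol : ∀ Z : Finset V, dvol A Zᶜ = vol - dvol A Z := by
    intro Z
    have := Finset.sum_add_sum_compl Z (ddeg A)
    simp only [dvol, hvoldef] at *
    linarith
  have hvolnonneg : ∀ Z : Finset V, 0 ≤ dvol A Z := fun Z =>
    Finset.sum_nonneg fun x _ => (hdegpos x).le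
  have hnf : (∑ x, f x ^ 2) = dvol A X * dvol A Xᶜ / vol := by
    rw [hf, hnormsq indX cX (dvol A X) (fun x => by by_cases hx : x ∈ X <;> simp [hiX, hx]) hsum_indX,
      hcomplvol X, hcX]
    field_simp
    ring
  have hng : (∑ x, g x ^ 2) = dvol A Y * dvol A Yᶜ / vol := by
    rw [hg, hnormsq indY cY (dvol A Y) (fun x => by by_cases hx : x ∈ Y <;> simp [hiY, hx]) hsum_indY,
      hcomplvol Y, hcY]
    field_simp
    ring
  -- the action of B on g
  set EY : V → ℝ := fun x => ∑ y ∈ Y, A x y with hEY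
  have hMg : ∀ x, (∑ y, B x y * g y) = (EY x - cY * d x) * (s x)⁻¹ := by
    intro x
    have h1 : ∀ y, B x y * g y = (s x)⁻¹ * (A x y * indY y) - cY * ((s x)⁻¹ * A x y) := by
      intro y
      rw [hB, hg]
      field_simp [hsne]
    rw [Finset.sum_congr rfl fun y _ => h1 y, Finset.sum_sub_distrib, ← Finset.mul_sum,
      ← Finset.mul_sum, ← Finset.mul_sum]
    have h2 : ∑ y, A x y * indY y = EY x := by
      simp [hiY, mul_ite, hEY, Finset.sum_ite_mem]
    have h3 : ∑ y, A x y = d x := rfl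
    rw [h2, h3]
    field_simp
  -- the key identity
  have hkey : (∑ x, f x * (dLalpha A 0 *ᵥ g) x)
      = (∑ x ∈ X, ∑ y ∈ Y, A x y) - dvol A X * dvol A Y / vol := by
    have h1 : ∀ x, f x * (dLalpha A 0 *ᵥ g) x
        = indX x * EY x - cY * (indX x * d x) - cX * EY x + cX * cY * d x := by
      intro x
      rw [hLapp g x, hMg x, hf]
      have h2 : (indX x - cX) * s x * ((EY x - cY * d x) * (s x)⁻¹)
          = (indX x - cX) * (EY x - cY * d x) := by
        field_simp [hsne]
      rw [h2]; ring
    rw [Finset.sum_congr rfl fun x _ => h1 x]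
    rw [Finset.sum_add_distrib, Finset.sum_sub_distrib, Finset.sum_sub_distrib,
      ← Finset.mul_sum, ← Finset.mul_sum, ← Finset.mul_sum]
    have hA1 : ∑ x, indX x * EY x = ∑ x ∈ X, ∑ y ∈ Y, A x y := by
      simp [hiX, ite_mul, hEY, Finset.sum_ite_mem]
    have hA2 : ∑ x, EY x = dvol A Y := by
      rw [hEY]
      show ∑ x, ∑ y ∈ Y, A x y = dvol A Y
      refine Finset.sum_comm.trans ?_
      simp only [dvol]
      exact Finset.sum_congr rfl fun y _ => hind y
    rw [hA1, hsum_indX, hA2, hsumd, hcX, hcY]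
    field_simp
    ring
  -- sigma_0 is nonnegative
  have hσ₀nonneg : 0 ≤ σ₀ := by
    obtain ⟨w, -, -, hw⟩ := hσ₀.1
    rw [hw]
    exact div_nonneg (Real.sqrt_nonneg _) (Real.sqrt_nonneg _)
  -- norm bound on M g
  have hMgle : euclNorm (dLalpha A 0 *ᵥ g) ≤ σ₀ * euclNorm g := by
    by_cases hg0 : g = 0
    · rw [hg0, Matrix.mulVec_zero]
      simp [euclNorm]
    · have hmem : euclNorm (dLalpha A 0 *ᵥ g) / euclNorm g ∈ sigmaSet A 0 :=
        ⟨g, hg0, horthg, rfl⟩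
      have hle := hσ₀.2 hmem
      have hgpos : 0 < euclNorm g := by
        obtain ⟨x, hx⟩ := Function.ne_iff.1 hg0
        refine Real.sqrt_pos.2 (Finset.sum_pos' (fun i _ => sq_nonneg _)
          ⟨x, Finset.mem_univ x, sq_pos_of_ne_zero hx⟩)
      exact (div_le_iff₀ hgpos).1 hle
  -- Cauchy-Schwarz
  have hCS : |∑ x, f x * (dLalpha A 0 *ᵥ g) x|
      ≤ euclNorm f * euclNorm (dLalpha A 0 *ᵥ g) := by
    have h1 := Finset.sum_mul_sq_le_sq_mul_sq Finset.univ f (dLalpha A 0 *ᵥ g)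
    have h2 : |∑ x, f x * (dLalpha A 0 *ᵥ g) x|
        = Real.sqrt ((∑ x, f x * (dLalpha A 0 *ᵥ g) x) ^ 2) := by
      rw [Real.sqrt_sq_eq_abs]
    rw [h2, euclNorm, euclNorm, ← Real.sqrt_mul (Finset.sum_nonneg fun x _ => sq_nonneg _)]
    exact Real.sqrt_le_sqrt h1
  have hNf : euclNorm f = Real.sqrt (dvol A X * dvol A Xᶜ / vol) := by
    rw [euclNorm, hnf]
  have hNg : euclNorm g = Real.sqrt (dvol A Y * dvol A Yᶜ / vol) := by
    rw [euclNorm, hng]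
  -- put everything together
  have hmain : |(∑ x ∈ X, ∑ y ∈ Y, A x y) - dvol A X * dvol A Y / vol|
      ≤ Real.sqrt (dvol A X * dvol A Xᶜ / vol) * (σ₀ * Real.sqrt (dvol A Y * dvol A Yᶜ / vol)) := by
    rw [← hkey, ← hNf, ← hNg]
    calc |∑ x, f x * (dLalpha A 0 *ᵥ g) x|
        ≤ euclNorm f * euclNorm (dLalpha A 0 *ᵥ g) := hCS
      _ ≤ euclNorm f * (σ₀ * euclNorm g) := by
          apply mul_le_mul_of_nonneg_left hMgle (Real.sqrt_nonneg _)
  refine hmain.trans (le_of_eq ?_)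
  have hP : (0:ℝ) ≤ dvol A X * dvol A Xᶜ := mul_nonneg (hvolnonneg X) (hvolnonneg Xᶜ)
  have hQ : (0:ℝ) ≤ dvol A Y * dvol A Yᶜ := mul_nonneg (hvolnonneg Y) (hvolnonneg Yᶜ)
  have h4 : dvol A X * dvol A Y * dvol A Xᶜ * dvol A Yᶜ
      = (dvol A X * dvol A Xᶜ) * (dvol A Y * dvol A Yᶜ) := by ring
  have hvv : Real.sqrt vol * Real.sqrt vol = vol := Real.mul_self_sqrt hvol.le
  have hsv : Real.sqrt vol ≠ 0 := Real.sqrt_ne_zero'.2 hvol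
  rw [Real.sqrt_div hP vol, Real.sqrt_div hQ vol, h4,
    Real.sqrt_mul hP]
  rw [← hvv]
  field_simp
  rw [Real.sqrt_sq (Real.sqrt_nonneg _)]
end
end

section
/- Let H be an r-uniform hypergraph and let s be an integer with 1 ≤ s ≤ r/2 such that every s-element subset of V is contained in some edge of H. Then 2 is an eigenvalue of the s-th Laplacian L^(s) of H if and only if r = 2s and G^(s) has a connected component which is bipartite, i.e. a connected component whose vertex set can be partitioned into two parts L and R with w(x,y) = 0 whenever x,y ∈ L or x,y ∈ R. -/
open Matrix Polynomial

noncomputable section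

/-- The degree of a vertex in a weighted graph with weight function `w`. -/
def wdeg {m : Type*} [Fintype m] (w : m → m → ℝ) (x : m) : ℝ := ∑ y, w x y

/-- The diagonal matrix `T^{-1/2}` of a weighted graph. -/
def invSqrtT {m : Type*} [Fintype m] [DecidableEq m] (w : m → m → ℝ) : Matrix m m ℝ :=
  Matrix.diagonal fun x => (Real.sqrt (wdeg w x))⁻¹

/-- The (normalized) Laplacian `I - T^{-1/2} A T^{-1/2}` of a weighted graph. -/
def wLap {m : Type*} [Fintype m] [DecidableEq m] (w : m → m → ℝ) : Matrix m m ℝ :=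
  1 - invSqrtT w * Matrix.of w * invSqrtT w

/-- The volume of a set of vertices of a weighted graph. -/
def wvol {m : Type*} [Fintype m] (w : m → m → ℝ) (X : Finset m) : ℝ := ∑ x ∈ X, wdeg w x

/-- The underlying simple graph of a weighted graph: vertices are adjacent when the
weight between them is positive (for a symmetric weight with zero diagonal this is
the usual adjacency). -/
def wGraph {m : Type*} (w : m → m → ℝ) : SimpleGraph m where
  Adj x y := x ≠ y ∧ 0 < w x y ∧ 0 < w y x
  symm := ⟨fun _ _ ⟨h1, h2, h3⟩ => ⟨h1.symm, h3, h2⟩⟩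
  loopless := ⟨fun _ h => h.1 rfl⟩

/-- The set `V^(s)` of ordered `s`-tuples of distinct vertices of `V`. -/
abbrev Vtup (V : Type*) (s : ℕ) := {f : Fin s → V // Function.Injective f}

/-- The set `[x]` of coordinates of an ordered tuple `x`. -/
def tset {V : Type*} [DecidableEq V] {s : ℕ} (x : Vtup V s) : Finset V :=
  Finset.univ.image x.val

/-- The degree of a vertex subset `S` in the hypergraph `H`, i.e. the number of
edges of `H` containing `S`. -/
def hdeg {V : Type*} [DecidableEq V] (H : Finset (Finset V)) (S : Finset V) : ℕ :=
  (H.filter fun F => S ⊆ F).card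

/-- The weight function of the weighted graph `G^(s)` on `V^(s)` associated with the
hypergraph `H`: when `[x]` and `[y]` are disjoint, `w(x,y)` is the number of edges of `H`
containing `[x] ∪ [y]`, and `w(x,y) = 0` otherwise. -/
def hw {V : Type*} [Fintype V] [DecidableEq V] (H : Finset (Finset V)) (s : ℕ)
    (x y : Vtup V s) : ℝ :=
  if Disjoint (tset x) (tset y) then
    ((H.filter fun F => tset x ∪ tset y ⊆ F).card : ℝ)
  else 0


section auxlemmas
set_option linter.unusedSectionVars false
open Finset

variable {V : Type*} [Fintype V] [DecidableEq V] {s : ℕ}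

lemma hw_nonneg (H : Finset (Finset V)) (x y : Vtup V s) : 0 ≤ hw H s x y := by
  unfold hw; split <;> positivity

lemma hw_symm (H : Finset (Finset V)) (x y : Vtup V s) : hw H s x y = hw H s y x := by
  unfold hw
  rw [Finset.union_comm]
  congr 1
  exact propext disjoint_comm

lemma hw_self (H : Finset (Finset V)) (hs : 1 ≤ s) (x : Vtup V s) : hw H s x x = 0 := by
  unfold hw
  rw [if_neg]
  intro h
  have hx : x.1 ⟨0, hs⟩ ∈ tset x := Finset.mem_image_of_mem _ (Finset.mem_univ _)
  exact (Finset.disjoint_left.1 h hx) hx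

lemma tset_card (x : Vtup V s) : (tset x).card = s := by
  rw [tset, Finset.card_image_of_injective _ x.2, Finset.card_univ, Fintype.card_fin]

lemma mem_tset {x : Vtup V s} {v : V} : v ∈ tset x ↔ ∃ i, x.1 i = v := by
  simp [tset]

/-- a tuple enumerating a finset of card `s` -/
def tupOf (B : Finset V) (hB : B.card = s) : Vtup V s :=
  ⟨fun i => (B.equivFin.symm (Fin.cast hB.symm i)).1, by
    intro a b hab
    have := B.equivFin.symm.injective (Subtype.ext hab)
    simpa [Fin.ext_iff, Fin.cast] using this⟩

lemma tset_tupOf (B : Finset V) (hB : B.card = s) : tset (tupOf B hB) = B := by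
  apply Finset.eq_of_subset_of_card_le
  · intro v hv
    rcases mem_tset.1 hv with ⟨i, rfl⟩
    exact (B.equivFin.symm _).2
  · rw [tset_card, hB]

lemma hw_pos_of_edge (H : Finset (Finset V)) {x y : Vtup V s} {F : Finset V} (hF : F ∈ H)
    (hd : Disjoint (tset x) (tset y)) (hsub : tset x ∪ tset y ⊆ F) :
    0 < hw H s x y := by
  rw [hw, if_pos hd]
  have : F ∈ H.filter fun G => tset x ∪ tset y ⊆ G := Finset.mem_filter.2 ⟨hF, hsub⟩
  have := Finset.card_pos.2 ⟨F, this⟩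
  exact_mod_cast this

lemma wdeg_pos (H : Finset (Finset V)) (r : ℕ) (hs2 : 2 * s ≤ r)
    (hunif : ∀ F ∈ H, F.card = r)
    (hcov : ∀ S : Finset V, S.card = s → ∃ F ∈ H, S ⊆ F) (x : Vtup V s) :
    0 < wdeg (hw H s) x := by
  obtain ⟨F, hF, hxF⟩ := hcov (tset x) (tset_card x)
  have hcardF : F.card = r := hunif F hF
  have hcardd : s ≤ (F \ tset x).card := by
    rw [Finset.card_sdiff_of_subset hxF, hcardF, tset_card]; omega
  obtain ⟨B, hBsub, hBcard⟩ := Finset.exists_subset_card_eq hcardd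
  set y := tupOf B hBcard
  have hty : tset y = B := tset_tupOf B hBcard
  have hd : Disjoint (tset x) (tset y) := by
    rw [hty]
    exact (Finset.disjoint_sdiff.mono_right hBsub)
  have hpos : 0 < hw H s x y := by
    apply hw_pos_of_edge H hF hd
    rw [hty]
    exact Finset.union_subset hxF (hBsub.trans (Finset.sdiff_subset))
  have hle : hw H s x y ≤ wdeg (hw H s) x :=
    Finset.single_le_sum (fun z _ => hw_nonneg H x z) (Finset.mem_univ y)
  linarith

end auxlemmas

section lapaux
set_option linter.unusedSectionVars false
open Matrix

variable {m : Type*} [Fintype m] [DecidableEq m]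

lemma wLap_mulVec (w : m → m → ℝ) (v : m → ℝ) (x : m) :
    (wLap w *ᵥ v) x = v x - (Real.sqrt (wdeg w x))⁻¹ *
      ∑ y, w x y * ((Real.sqrt (wdeg w y))⁻¹ * v y) := by
  simp only [wLap, sub_mulVec, one_mulVec, Pi.sub_apply]
  congr 1
  show (fun j => (invSqrtT w * Matrix.of w * invSqrtT w) x j) ⬝ᵥ v = _
  rw [dotProduct, Finset.mul_sum]
  apply Finset.sum_congr rfl
  intro y _
  rw [Matrix.mul_apply]
  simp only [invSqrtT, Matrix.mul_apply, Matrix.diagonal_apply, Matrix.of_apply]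
  simp [Finset.sum_ite_eq, Finset.sum_ite_eq', ite_mul, mul_ite]
  ring

lemma lap_eigen_iff (w : m → m → ℝ) (hd : ∀ x, 0 < wdeg w x) (v : m → ℝ) :
    wLap w *ᵥ v = (2 : ℝ) • v ↔
      ∀ x, ∑ y, w x y * ((Real.sqrt (wdeg w y))⁻¹ * v y)
        = -(wdeg w x) * ((Real.sqrt (wdeg w x))⁻¹ * v x) := by
  rw [funext_iff]
  apply forall_congr'
  intro x
  rw [wLap_mulVec]
  set c := Real.sqrt (wdeg w x) with hcdef
  set S := ∑ y, w x y * ((Real.sqrt (wdeg w y))⁻¹ * v y) with hSdef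
  have hc : c * c = wdeg w x := Real.mul_self_sqrt (le_of_lt (hd x))
  have hcne : c ≠ 0 := (Real.sqrt_pos.2 (hd x)).ne'
  simp only [Pi.smul_apply, smul_eq_mul]
  have key : (-(wdeg w x)) * (c⁻¹ * v x) = -(c * v x) := by
    rw [← hc]; field_simp
  rw [key]
  constructor
  · intro h
    have h2 : c⁻¹ * S = -v x := by linarith
    calc S = c * (c⁻¹ * S) := by field_simp
    _ = -(c * v x) := by rw [h2]; ring
  · intro h
    have h2 : c⁻¹ * S = -v x := by rw [h]; field_simp
    linarith

lemma flip_of_eigen (w : m → m → ℝ)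
    (hsymm : ∀ x y, w x y = w y x) (hnn : ∀ x y, 0 ≤ w x y) (u : m → ℝ)
    (heq : ∀ x, ∑ y, w x y * u y = -(wdeg w x) * u x) :
    ∀ x y, w x y ≠ 0 → u y = -u x := by
  have key : ∀ x : m, ∑ y, w x y * (u x + u y) ^ 2
      = (∑ y, w x y * (u y) ^ 2) - (wdeg w x) * (u x) ^ 2 := by
    intro x
    have expand : ∀ y : m, w x y * (u x + u y) ^ 2
        = w x y * (u x) ^ 2 + w x y * (u y) ^ 2 + 2 * (w x y * u y) * u x := by
      intro y; ring
    rw [Finset.sum_congr rfl fun y _ => expand y]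
    rw [Finset.sum_add_distrib, Finset.sum_add_distrib]
    have h1 : ∑ y : m, w x y * (u x) ^ 2 = (wdeg w x) * (u x) ^ 2 := by
      rw [wdeg, Finset.sum_mul]
    have h2 : ∑ y : m, 2 * (w x y * u y) * u x = 2 * (∑ y, w x y * u y) * u x := by
      rw [Finset.mul_sum, Finset.sum_mul]
    rw [h1, h2, heq x]
    ring
  have hswap : ∑ x : m, ∑ y, w x y * (u y) ^ 2 = ∑ x : m, (wdeg w x) * (u x) ^ 2 := by
    rw [Finset.sum_comm]
    apply Finset.sum_congr rfl
    intro y _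
    have e1 : ∑ x : m, w x y * (u y) ^ 2 = (∑ x : m, w x y) * (u y) ^ 2 := by
      rw [Finset.sum_mul]
    rw [e1]
    have e2 : ∑ x : m, w x y = wdeg w y := by
      rw [wdeg]
      exact Finset.sum_congr rfl fun x _ => hsymm x y
    rw [e2]
  have htot : ∑ x : m, ∑ y, w x y * (u x + u y) ^ 2 = 0 := by
    rw [Finset.sum_congr rfl fun x _ => key x, Finset.sum_sub_distrib, hswap, sub_self]
  have hxnn : ∀ x ∈ Finset.univ (α := m), 0 ≤ ∑ y, w x y * (u x + u y) ^ 2 := by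
    intro x _
    exact Finset.sum_nonneg fun y _ => mul_nonneg (hnn x y) (sq_nonneg _)
  have hinner : ∀ x ∈ Finset.univ (α := m), ∑ y, w x y * (u x + u y) ^ 2 = 0 :=
    (Finset.sum_eq_zero_iff_of_nonneg hxnn).1 htot
  intro x y hwxy
  have hterm : ∀ y' ∈ Finset.univ (α := m), w x y' * (u x + u y') ^ 2 = 0 :=
    (Finset.sum_eq_zero_iff_of_nonneg
      (fun y' _ => mul_nonneg (hnn x y') (sq_nonneg _))).1 (hinner x (Finset.mem_univ x))
  have := hterm y (Finset.mem_univ y)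
  rcases mul_eq_zero.1 this with h | h
  · exact absurd h hwxy
  · have h4 : u x + u y = 0 := by
      have := sq_eq_zero_iff.1 h
      linarith [this]
    linarith

lemma walk_dichotomy (w : m → m → ℝ) (u : m → ℝ)
    (hflip : ∀ x y, w x y ≠ 0 → u y = -u x) :
    ∀ {a b : m}, (wGraph w).Walk a b → u b = u a ∨ u b = -u a := by
  intro a b p
  induction p with
  | nil => left; rfl
  | @cons a c b h p ih =>
    have hc : u c = -u a := hflip _ _ (ne_of_gt (show a ≠ c ∧ 0 < w a c ∧ 0 < w c a from h).2.1)
    rcases ih with h1 | h1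
    · right; rw [h1, hc]
    · left; rw [h1, hc, neg_neg]

end lapaux

section walkaux
set_option linter.unusedSectionVars false
set_option maxHeartbeats 1000000
open Finset

variable {V : Type*} [Fintype V] [DecidableEq V] {s : ℕ}

/-- the cyclic interval tuple: coordinates `f((a+i) mod r)` -/
def wT {r : ℕ} (s : ℕ) (hr : 0 < r) (hsr : s ≤ r) (f : Fin r → V)
    (hf : Function.Injective f) (a : ℕ) : Vtup V s :=
  ⟨fun i => f ⟨(a + i) % r, Nat.mod_lt _ hr⟩, by
    intro i j hij
    have h' : (a + (i : ℕ)) % r = (a + (j : ℕ)) % r := congrArg Fin.val (hf hij)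
    have h2 : (i : ℕ) % r = (j : ℕ) % r := Nat.ModEq.add_left_cancel' a h'
    have hi := i.2; have hj := j.2
    rw [Nat.mod_eq_of_lt (lt_of_lt_of_le hi hsr),
        Nat.mod_eq_of_lt (lt_of_lt_of_le hj hsr)] at h2
    exact Fin.ext h2⟩

lemma wT_mod {r : ℕ} (hr : 0 < r) (hsr : s ≤ r) (f : Fin r → V)
    (hf : Function.Injective f) {a b : ℕ} (hab : a % r = b % r) :
    wT s hr hsr f hf a = wT s hr hsr f hf b := by
  apply Subtype.ext
  funext i
  show f _ = f _
  congr 1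
  exact Fin.ext (Nat.ModEq.add_right _ hab)

lemma tset_wT {r : ℕ} (hr : 0 < r) (hsr : s ≤ r) (f : Fin r → V)
    (hf : Function.Injective f) (a : ℕ) {v : V} :
    v ∈ tset (wT s hr hsr f hf a) ↔ ∃ i : ℕ, i < s ∧ f ⟨(a + i) % r, Nat.mod_lt _ hr⟩ = v := by
  rw [mem_tset]
  constructor
  · rintro ⟨i, rfl⟩; exact ⟨i, i.2, rfl⟩
  · rintro ⟨i, hi, rfl⟩; exact ⟨⟨i, hi⟩, rfl⟩

lemma wT_disjoint {r : ℕ} (hr : 0 < r) (hsr : s ≤ r) (f : Fin r → V)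
    (hf : Function.Injective f) (a d : ℕ) (hd1 : s ≤ d) (hd2 : d + s ≤ r) :
    Disjoint (tset (wT s hr hsr f hf a)) (tset (wT s hr hsr f hf (a + d))) := by
  rw [Finset.disjoint_left]
  intro v hv hv'
  obtain ⟨i, hi, hiv⟩ := (tset_wT hr hsr f hf a).1 hv
  obtain ⟨j, hj, hjv⟩ := (tset_wT hr hsr f hf (a + d)).1 hv'
  rw [← hjv] at hiv
  have h := congrArg Fin.val (hf hiv)
  have h' : (a + i) % r = (a + d + j) % r := h
  have h2 : (i : ℕ) % r = (d + j) % r := by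
    have : (a + i) % r = (a + (d + j)) % r := by rw [h']; ring_nf
    exact Nat.ModEq.add_left_cancel' a this
  rw [Nat.mod_eq_of_lt (lt_of_lt_of_le hi hsr),
      Nat.mod_eq_of_lt (by omega : d + j < r)] at h2
  omega

lemma odd_walk (r : ℕ) (hs1 : 1 ≤ s) (hr : 2 * s < r) (H : Finset (Finset V))
    (hunif : ∀ F ∈ H, F.card = r)
    (hcov : ∀ S : Finset V, S.card = s → ∃ F ∈ H, S ⊆ F)
    (ε : Vtup V s → ℝ)
    (hP : ∀ x y : Vtup V s, ε x ≠ 0 → hw H s x y ≠ 0 → ε y = -ε x)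
    (x₀ : Vtup V s) : ε x₀ = 0 := by
  by_contra hx0
  obtain ⟨F, hF, hxF⟩ := hcov (tset x₀) (tset_card x₀)
  have hr0 : 0 < r := by omega
  have hsr : s ≤ r := by omega
  have hFcard : F.card = r := hunif F hF
  set C := F \ tset x₀ with hCdef
  have hCcard : C.card = r - s := by
    rw [hCdef, Finset.card_sdiff_of_subset hxF, hFcard, tset_card]
  set f : Fin r → V := fun i =>
    if h : (i : ℕ) < s then x₀.1 ⟨i, h⟩
    else (C.equivFin.symm (Fin.cast hCcard.symm ⟨(i : ℕ) - s, by have := i.2; omega⟩)).1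
    with hfdef
  have hfmem : ∀ i, f i ∈ F := by
    intro i
    by_cases h : (i : ℕ) < s
    · simp only [hfdef, dif_pos h]
      exact hxF (mem_tset.2 ⟨⟨i, h⟩, rfl⟩)
    · simp only [hfdef, dif_neg h]
      exact (Finset.mem_sdiff.1 (C.equivFin.symm _).2).1
  have hfinj : Function.Injective f := by
    intro a b hab
    by_cases ha : (a : ℕ) < s
    · by_cases hb : (b : ℕ) < s
      · simp only [hfdef, dif_pos ha, dif_pos hb] at hab
        have h3 := congrArg Fin.val (x₀.2 hab)
        exact Fin.ext (by simpa using h3)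
      · exfalso
        simp only [hfdef, dif_pos ha, dif_neg hb] at hab
        have h1 : x₀.1 ⟨a, ha⟩ ∈ tset x₀ := mem_tset.2 ⟨_, rfl⟩
        have h2 := (Finset.mem_sdiff.1 (C.equivFin.symm
          (Fin.cast hCcard.symm ⟨(b : ℕ) - s, by have := b.2; omega⟩)).2).2
        rw [hab] at h1
        exact h2 h1
    · by_cases hb : (b : ℕ) < s
      · exfalso
        simp only [hfdef, dif_neg ha, dif_pos hb] at hab
        have h1 : x₀.1 ⟨b, hb⟩ ∈ tset x₀ := mem_tset.2 ⟨_, rfl⟩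
        have h2 := (Finset.mem_sdiff.1 (C.equivFin.symm
          (Fin.cast hCcard.symm ⟨(a : ℕ) - s, by have := a.2; omega⟩)).2).2
        rw [← hab] at h1
        exact h2 h1
      · simp only [hfdef, dif_neg ha, dif_neg hb] at hab
        have := C.equivFin.symm.injective (Subtype.ext hab)
        have hval : (a : ℕ) - s = (b : ℕ) - s := by
          simpa [Fin.ext_iff, Fin.cast] using this
        exact Fin.ext (by omega)
  set T : ℕ → Vtup V s := wT s hr0 hsr f hfinj with hTdef
  have hT0 : T 0 = x₀ := by
    apply Subtype.ext
    funext i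
    show f ⟨(0 + (i : ℕ)) % r, _⟩ = x₀.1 i
    have hv : (0 + (i : ℕ)) % r = (i : ℕ) := by
      rw [Nat.zero_add]
      exact Nat.mod_eq_of_lt (lt_of_lt_of_le i.2 hsr)
    have hlt : (0 + (i : ℕ)) % r < s := by
      rw [hv]; exact i.2
    simp only [hfdef, dif_pos hlt]
    have heq : (⟨(0 + (i : ℕ)) % r, hlt⟩ : Fin s) = i := Fin.ext hv
    rw [heq]
  have hwTne : ∀ a d : ℕ, s ≤ d → d + s ≤ r → hw H s (T a) (T (a + d)) ≠ 0 := by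
    intro a d h1 h2
    have hdisj := wT_disjoint hr0 hsr f hfinj a d h1 h2
    have hsub : tset (T a) ∪ tset (T (a + d)) ⊆ F := by
      intro v hv
      rcases Finset.mem_union.1 hv with hv | hv
      · obtain ⟨i, _, hiv⟩ := (tset_wT hr0 hsr f hfinj a).1 hv
        rw [← hiv]; exact hfmem _
      · obtain ⟨i, _, hiv⟩ := (tset_wT hr0 hsr f hfinj (a + d)).1 hv
        rw [← hiv]; exact hfmem _
    exact ne_of_gt (hw_pos_of_edge H hF hdisj hsub)
  set N := r * s with hNdef
  set M := 2 * s + 1 with hMdef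
  have hM : 0 < M := by omega
  set A : ℕ → ℕ := fun k => N * k / M with hAdef
  have hlow : ∀ k, A k + s ≤ A (k + 1) := by
    intro k
    rw [hAdef]
    rw [Nat.le_div_iff_mul_le hM]
    have h1 : N * k / M * M ≤ N * k := Nat.div_mul_le_self _ _
    have h2 : s * M ≤ N := by
      calc s * M = (2 * s + 1) * s := by rw [hMdef]; ring
      _ ≤ r * s := Nat.mul_le_mul_right s (by omega)
      _ = N := by rw [hNdef]
    calc (N * k / M + s) * M = N * k / M * M + s * M := by ring
    _ ≤ N * k + N := by omega
    _ = N * (k + 1) := by ring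
  have hup : ∀ k, A (k + 1) ≤ A k + (r - s) := by
    intro k
    have hNk := Nat.div_add_mod (N * k) M
    have hmod : N * k % M < M := Nat.mod_lt _ hM
    have hNle : N + 1 ≤ M * (r - s) := by
      set t := r - 2 * s with htdef
      have ht1 : 1 ≤ t := by omega
      have hrt : r = 2 * s + t := by omega
      have hrs : r - s = s + t := by omega
      rw [hNdef, hMdef, hrs, hrt]
      nlinarith [Nat.mul_le_mul hs1 ht1]
    have hlt : A (k + 1) < A k + (r - s) + 1 := by
      rw [hAdef]
      rw [Nat.div_lt_iff_lt_mul hM]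
      have hexp : N * (k + 1) = N * k + N := by ring
      have hgoal : N * k + N < (N * k / M + (r - s) + 1) * M := by
        have hrw : (N * k / M + (r - s) + 1) * M
            = M * (N * k / M) + M * (r - s) + M := by ring
        rw [hrw]
        linarith
      rw [hexp]
      exact hgoal
    omega
  have main : ∀ k, ε (T (A k)) = (-1 : ℝ) ^ k * ε x₀ := by
    intro k
    induction k with
    | zero =>
      have : A 0 = 0 := by simp [hAdef]
      rw [this, hT0, pow_zero, one_mul]
    | succ k ih =>
      have hlk := hlow k
      have huk := hup k
      set d := A (k + 1) - A k with hddef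
      have hAk1 : A (k + 1) = A k + d := by omega
      have hd1 : s ≤ d := by omega
      have hd2 : d + s ≤ r := by omega
      have hεne : ε (T (A k)) ≠ 0 := by
        rw [ih]
        exact mul_ne_zero (pow_ne_zero _ (by norm_num)) hx0
      have hflip := hP _ _ hεne (hwTne (A k) d hd1 hd2)
      rw [hAk1, hflip, ih]
      ring
  have h1 := main M
  have hAM : A M = N := by rw [hAdef]; exact Nat.mul_div_cancel _ hM
  have hTN : T N = T 0 := by
    apply wT_mod
    rw [hNdef, Nat.mul_mod_right, Nat.zero_mod]
  rw [hAM, hTN, hT0] at h1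
  have hodd : ((-1 : ℝ)) ^ M = -1 := Odd.neg_one_pow ⟨s, by omega⟩
  rw [hodd] at h1
  apply hx0
  linarith

end walkaux

/-- `2` is an eigenvalue of the `s`-th Laplacian `L^(s)` of an
`r`-uniform hypergraph `H` (with every `s`-set covered by an edge) if and only if
`r = 2s` and `G^(s)` has a bipartite connected component. -/
theorem stmt_12 {V : Type*} [Fintype V] [DecidableEq V]
    (r s : ℕ) (hs1 : 1 ≤ s) (hs2 : 2 * s ≤ r)
    (H : Finset (Finset V)) (hunif : ∀ F ∈ H, F.card = r)
    (hcov : ∀ S : Finset V, S.card = s → ∃ F ∈ H, S ⊆ F) :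
    (∃ v : Vtup V s → ℝ, v ≠ 0 ∧ wLap (hw H s) *ᵥ v = (2 : ℝ) • v) ↔
      (r = 2 * s ∧ ∃ x₀ : Vtup V s, ∃ L R : Set (Vtup V s),
        Disjoint L R ∧ L ∪ R = {y | (wGraph (hw H s)).Reachable x₀ y} ∧
        (∀ a ∈ L, ∀ b ∈ L, hw H s a b = 0) ∧
        (∀ a ∈ R, ∀ b ∈ R, hw H s a b = 0)) := by
  classical
  set w := hw H s with hwdef
  have hsymm : ∀ x y : Vtup V s, w x y = w y x := hw_symm H
  have hnn : ∀ x y : Vtup V s, 0 ≤ w x y := hw_nonneg H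
  have hself : ∀ x : Vtup V s, w x x = 0 := hw_self H hs1
  have hdpos : ∀ x : Vtup V s, 0 < wdeg w x := wdeg_pos H r hs2 hunif hcov
  constructor
  · rintro ⟨v, hv, heig⟩
    rw [lap_eigen_iff w hdpos] at heig
    set u : Vtup V s → ℝ := fun y => (Real.sqrt (wdeg w y))⁻¹ * v y with hudef
    have hflip := flip_of_eigen w hsymm hnn u heig
    have hune : u ≠ 0 := by
      intro h
      apply hv
      funext x
      have hx : u x = 0 := congrFun h x
      have hcne : (Real.sqrt (wdeg w x))⁻¹ ≠ 0 :=
        inv_ne_zero (Real.sqrt_pos.2 (hdpos x)).ne'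
      have : v x = 0 := by
        rcases mul_eq_zero.1 hx with h' | h'
        · exact absurd h' hcne
        · exact h'
      simpa using this
    obtain ⟨x₀, hx0⟩ := Function.ne_iff.1 hune
    have hx0' : u x₀ ≠ 0 := by simpa using hx0
    have hr2s : r = 2 * s := by
      by_contra hne
      have hlt : 2 * s < r := lt_of_le_of_ne hs2 (fun h => hne h.symm)
      exact hx0' (odd_walk r hs1 hlt H hunif hcov u (fun x y _ hw => hflip x y hw) x₀)
    refine ⟨hr2s, x₀,
      {y | (wGraph w).Reachable x₀ y ∧ u y = u x₀},
      {y | (wGraph w).Reachable x₀ y ∧ u y = -u x₀}, ?_, ?_, ?_, ?_⟩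
    · rw [Set.disjoint_left]
      rintro y ⟨_, h1⟩ ⟨_, h2⟩
      rw [h1] at h2
      apply hx0'
      linarith
    · ext y
      simp only [Set.mem_union, Set.mem_setOf_eq]
      constructor
      · rintro (⟨h, _⟩ | ⟨h, _⟩) <;> exact h
      · intro h
        obtain ⟨p⟩ := h
        rcases walk_dichotomy w u hflip p with h1 | h1
        · exact Or.inl ⟨⟨p⟩, h1⟩
        · exact Or.inr ⟨⟨p⟩, h1⟩
    · rintro a ⟨_, ha⟩ b ⟨_, hb⟩
      by_contra hab
      have := hflip a b hab
      rw [ha, hb] at this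
      apply hx0'
      linarith
    · rintro a ⟨_, ha⟩ b ⟨_, hb⟩
      by_contra hab
      have := hflip a b hab
      rw [ha, hb] at this
      apply hx0'
      linarith
  · rintro ⟨_, x₀, L, R, hdisj, hun, hL, hR⟩
    set ε : Vtup V s → ℝ := fun y => if y ∈ L then 1 else if y ∈ R then -1 else 0 with hεdef
    have hx0mem : x₀ ∈ L ∪ R := by
      rw [hun]
      exact SimpleGraph.Reachable.refl x₀
    have hstep : ∀ x y : Vtup V s, w x y ≠ 0 → ε y = -ε x := by
      intro x y hwne
      have hne : x ≠ y := by
        intro h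
        rw [h] at hwne
        exact hwne (hself y)
      have hpos : 0 < w x y := lt_of_le_of_ne (hnn x y) (Ne.symm hwne)
      have hpos' : 0 < w y x := by rw [← hsymm x y]; exact hpos
      have hadj : (wGraph w).Adj x y := show x ≠ y ∧ 0 < w x y ∧ 0 < w y x from ⟨hne, hpos, hpos'⟩
      by_cases hxL : x ∈ L
      · have hrx : (wGraph w).Reachable x₀ x := by
          have : x ∈ L ∪ R := Or.inl hxL
          rw [hun] at this
          exact this
        have hry : (wGraph w).Reachable x₀ y := hrx.trans hadj.reachable
        have hymem : y ∈ L ∪ R := by rw [hun]; exact hry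
        rcases hymem with hyL | hyR
        · exact absurd (hL x hxL y hyL) hwne
        · have hynL : y ∉ L := fun h => (Set.disjoint_left.1 hdisj h) hyR
          simp only [hεdef]
          rw [if_neg hynL, if_pos hyR, if_pos hxL]
          try norm_num
      · by_cases hxR : x ∈ R
        · have hrx : (wGraph w).Reachable x₀ x := by
            have : x ∈ L ∪ R := Or.inr hxR
            rw [hun] at this
            exact this
          have hry : (wGraph w).Reachable x₀ y := hrx.trans hadj.reachable
          have hymem : y ∈ L ∪ R := by rw [hun]; exact hry
          rcases hymem with hyL | hyR
          · simp only [hεdef]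
            rw [if_pos hyL, if_neg hxL, if_pos hxR]
            try norm_num
          · exact absurd (hR x hxR y hyR) hwne
        · have hynLR : y ∉ L ∪ R := by
            intro hy
            rw [hun] at hy
            have hry : (wGraph w).Reachable x₀ y := hy
            have hrx : (wGraph w).Reachable x₀ x := hry.trans hadj.symm.reachable
            have : x ∈ L ∪ R := by rw [hun]; exact hrx
            rcases this with h | h
            · exact hxL h
            · exact hxR h
          have hynL : y ∉ L := fun h => hynLR (Or.inl h)
          have hynR : y ∉ R := fun h => hynLR (Or.inr h)
          simp only [hεdef]
          rw [if_neg hynL, if_neg hynR, if_neg hxL, if_neg hxR]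
          try norm_num
    have key : ∀ x : Vtup V s, ∑ y, w x y * ε y = -(wdeg w x) * ε x := by
      intro x
      have hterm : ∀ y ∈ Finset.univ (α := Vtup V s),
          w x y * ε y = -(w x y * ε x) := by
        intro y _
        by_cases h : w x y = 0
        · rw [h]; ring
        · rw [hstep x y h]; ring
      rw [Finset.sum_congr rfl hterm, Finset.sum_neg_distrib, ← Finset.sum_mul, wdeg]
      ring
    refine ⟨fun x => Real.sqrt (wdeg w x) * ε x, ?_, ?_⟩
    · intro h
      have h0 := congrFun h x₀
      have hsne : Real.sqrt (wdeg w x₀) ≠ 0 := (Real.sqrt_pos.2 (hdpos x₀)).ne'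
      have hεx0 : ε x₀ ≠ 0 := by
        simp only [hεdef]
        rcases hx0mem with h' | h'
        · rw [if_pos h']; norm_num
        · have : x₀ ∉ L := fun hh => (Set.disjoint_left.1 hdisj hh) h'
          rw [if_neg this, if_pos h']; norm_num
      have : Real.sqrt (wdeg w x₀) * ε x₀ = 0 := by simpa using h0
      rcases mul_eq_zero.1 this with h' | h'
      · exact hsne h'
      · exact hεx0 h'
    · rw [lap_eigen_iff w hdpos]
      intro x
      have hsimp : ∀ y : Vtup V s,
          (Real.sqrt (wdeg w y))⁻¹ * (Real.sqrt (wdeg w y) * ε y) = ε y := by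
        intro y
        have hsne : Real.sqrt (wdeg w y) ≠ 0 := (Real.sqrt_pos.2 (hdpos y)).ne'
        field_simp
      calc ∑ y, w x y * ((Real.sqrt (wdeg w y))⁻¹ * (Real.sqrt (wdeg w y) * ε y))
          = ∑ y, w x y * ε y := by
            exact Finset.sum_congr rfl fun y _ => by rw [hsimp y]
      _ = -(wdeg w x) * ε x := key x
      _ = -(wdeg w x) * ((Real.sqrt (wdeg w x))⁻¹ * (Real.sqrt (wdeg w x) * ε x)) := by
            rw [hsimp x]
end
end
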